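/- arXiv:2507.13749 — 8 statements merged into one kernel-verified Lean document; each statement's English description precedes it below -/
import Mathlib

section
/- Let A be a commutative ring and 𝔞 an ideal of A. The quotient module A/𝔞 is a monoform A-module if and only if 𝔞 is a prime ideal of A. -/
/-- A module `M` over `A` is *monoform* if it is nonzero and for every nonzero
submodule `N` of `M`, no nonzero submodule of `M` embeds into `M ⧸ N`. -/
def Monoform (A M : Type*) [Ring A] [AddCommGroup M] [Module A M] : Prop :=
  Nontrivial M ∧
    ∀ (N : Submodule A M), N ≠ ⊥ →
      ∀ (K : Submodule A M) (f : K →ₗ[A] M ⧸ N), Function.Injective f → K = ⊥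

theorem quotient_monoform_iff_prime {A : Type*} [CommRing A] (𝔞 : Ideal A) :
    Monoform A (A ⧸ 𝔞) ↔ 𝔞.IsPrime := by
  constructor
  · rintro ⟨hnt, hmono⟩
    constructor
    · intro htop
      have hs : Subsingleton (A ⧸ 𝔞) := by
        rw [Submodule.Quotient.subsingleton_iff]; exact htop
      exact absurd hs (not_subsingleton _)
    · intro a b hab
      by_contra h
      push_neg at h
      obtain ⟨ha, hb⟩ := h
      set ψ : A →ₗ[A] A ⧸ 𝔞 :=
        LinearMap.toSpanSingleton A _ (Submodule.Quotient.mk a) with hψ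
      have hψapp : ∀ c : A, ψ c = Submodule.Quotient.mk (c * a) := by
        intro c
        rw [hψ, LinearMap.toSpanSingleton_apply, ← Submodule.Quotient.mk_smul,
          smul_eq_mul]
      have h𝔞ker : 𝔞 ≤ LinearMap.ker ψ := by
        intro c hc
        rw [LinearMap.mem_ker, hψapp, Submodule.Quotient.mk_eq_zero]
        exact Ideal.mul_mem_right a 𝔞 hc
      set N : Submodule A (A ⧸ 𝔞) := (LinearMap.ker ψ).map 𝔞.mkQ with hNdef
      have hN : N ≠ ⊥ := by
        intro hbot
        have hbmem : (Submodule.Quotient.mk b : A ⧸ 𝔞) ∈ N := by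
          refine ⟨b, ?_, rfl⟩
          show b ∈ LinearMap.ker ψ
          rw [LinearMap.mem_ker, hψapp, Submodule.Quotient.mk_eq_zero,
            mul_comm]
          exact hab
        rw [hbot, Submodule.mem_bot, Submodule.Quotient.mk_eq_zero] at hbmem
        exact hb hbmem
      have e1 := Submodule.quotientQuotientEquivQuotient 𝔞 (LinearMap.ker ψ) h𝔞ker
      have e2 := ψ.quotKerEquivRange
      have hK := hmono N hN (LinearMap.range ψ)
        (e2.symm.trans e1.symm).toLinearMap (e2.symm.trans e1.symm).injective
      have hmem : (Submodule.Quotient.mk a : A ⧸ 𝔞) ∈ LinearMap.range ψ := by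
        exact ⟨1, by rw [hψapp, one_mul]⟩
      rw [hK, Submodule.mem_bot, Submodule.Quotient.mk_eq_zero] at hmem
      exact ha hmem
  · intro hp
    refine ⟨?_, ?_⟩
    · exact Submodule.Quotient.nontrivial_iff.mpr hp.ne_top
    · intro N hN K f hf
      obtain ⟨n, hnN, hn0⟩ := (Submodule.ne_bot_iff N).mp hN
      obtain ⟨a, rfl⟩ := Submodule.Quotient.mk_surjective 𝔞 n
      have ha : a ∉ 𝔞 := fun h => hn0 (Submodule.Quotient.mk_eq_zero 𝔞 |>.mpr h)
      have hsmul : ∀ z : (A ⧸ 𝔞) ⧸ N, a • z = 0 := by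
        intro z
        obtain ⟨y, rfl⟩ := Submodule.Quotient.mk_surjective N z
        rw [← Submodule.Quotient.mk_smul, Submodule.Quotient.mk_eq_zero]
        obtain ⟨c, rfl⟩ := Submodule.Quotient.mk_surjective 𝔞 y
        rw [← Submodule.Quotient.mk_smul,
          show a • c = c • a from by simp [smul_eq_mul, mul_comm],
          Submodule.Quotient.mk_smul]
        exact N.smul_mem c hnN
      rw [Submodule.eq_bot_iff]
      intro x hx
      have hfz : f (a • ⟨x, hx⟩) = 0 := by
        rw [map_smul]
        exact hsmul _
      have hax : a • (⟨x, hx⟩ : K) = 0 := hf (by rw [hfz, map_zero])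
      have hax' : a • x = 0 := by
        have := congrArg (Subtype.val) hax
        simpa using this
      obtain ⟨c, rfl⟩ := Submodule.Quotient.mk_surjective 𝔞 x
      rw [← Submodule.Quotient.mk_smul, Submodule.Quotient.mk_eq_zero,
        smul_eq_mul] at hax'
      rcases hp.mem_or_mem hax' with h | h
      · exact absurd h ha
      · exact (Submodule.Quotient.mk_eq_zero 𝔞).mpr h
end

section
/- The relation of atom-equivalence is transitive on monoform modules: if H₁, H₂, H₃ are monoform modules over a ring A, H₁ and H₂ have a common nonzero subobject (i.e., there exist nonzero submodules of H₁ and H₂ that are isomorphic), and H₂ and H₃ have a common nonzero subobject, then H₁ and H₃ have a common nonzero subobject. -/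
/-- Two modules have a common nonzero subobject if some nonzero submodule of
one is isomorphic to a submodule of the other. -/
def CommonNonzeroSubobject (A M₁ M₂ : Type*) [Ring A] [AddCommGroup M₁] [Module A M₁]
    [AddCommGroup M₂] [Module A M₂] : Prop :=
  ∃ (K₁ : Submodule A M₁) (K₂ : Submodule A M₂),
    K₁ ≠ ⊥ ∧ Nonempty (K₁ ≃ₗ[A] K₂)

/-- Monoform modules are uniform: two nonzero submodules intersect nontrivially. -/
lemma Monoform.uniform {A M : Type*} [Ring A] [AddCommGroup M] [Module A M]
    (h : Monoform A M) {N₁ N₂ : Submodule A M} (h₁ : N₁ ≠ ⊥) (h₂ : N₂ ≠ ⊥) :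
    N₁ ⊓ N₂ ≠ ⊥ := by
  intro hinf
  apply h₁
  refine h.2 N₂ h₂ N₁ (N₂.mkQ.comp N₁.subtype) ?_
  rw [← LinearMap.ker_eq_bot]
  ext x
  simp only [LinearMap.mem_ker, LinearMap.comp_apply, Submodule.mkQ_apply,
    Submodule.Quotient.mk_eq_zero, Submodule.mem_bot]
  constructor
  · intro hx
    have : (x : M) ∈ N₁ ⊓ N₂ := ⟨x.2, hx⟩
    rw [hinf, Submodule.mem_bot] at this
    exact Subtype.ext this
  · rintro rfl; exact N₂.zero_mem

lemma ne_bot_of_nontrivial {A M : Type*} [Ring A] [AddCommGroup M] [Module A M]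
    (p : Submodule A M) [Nontrivial p] : p ≠ ⊥ := by
  intro h
  rcases exists_ne (0 : p) with ⟨x, hx⟩
  exact hx (Subtype.ext (by simpa [h] using x.2))

/-- Atom equivalence is transitive on monoform modules. -/
theorem atomEquiv_trans {A H₁ H₂ H₃ : Type*} [Ring A]
    [AddCommGroup H₁] [Module A H₁] [AddCommGroup H₂] [Module A H₂]
    [AddCommGroup H₃] [Module A H₃]
    (h₁ : Monoform A H₁) (h₂ : Monoform A H₂) (h₃ : Monoform A H₃)
    (h₁₂ : CommonNonzeroSubobject A H₁ H₂)
    (h₂₃ : CommonNonzeroSubobject A H₂ H₃) :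
    CommonNonzeroSubobject A H₁ H₃ := by
  obtain ⟨K₁, K₂, hK₁, ⟨e⟩⟩ := h₁₂
  obtain ⟨L₂, L₃, hL₂, ⟨e'⟩⟩ := h₂₃
  -- K₂ is nonzero
  haveI : Nontrivial K₁ := (Submodule.nontrivial_iff_ne_bot).2 hK₁
  haveI : Nontrivial K₂ := (e.symm).toEquiv.nontrivial
  have hK₂ : K₂ ≠ ⊥ := ne_bot_of_nontrivial K₂
  -- intersection is nonzero
  set Q : Submodule A H₂ := K₂ ⊓ L₂ with hQ
  have hQne : Q ≠ ⊥ := h₂.uniform hK₂ hL₂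
  -- view Q inside K₂ and inside L₂
  have eK : (Q.comap K₂.subtype) ≃ₗ[A] Q := Submodule.comapSubtypeEquivOfLe inf_le_left
  have eL : (Q.comap L₂.subtype) ≃ₗ[A] Q := Submodule.comapSubtypeEquivOfLe inf_le_right
  -- transport into K₁ and L₃
  set S₁ : Submodule A K₁ := (Q.comap K₂.subtype).map (e.symm : K₂ →ₗ[A] K₁) with hS₁
  set T₃ : Submodule A L₃ := (Q.comap L₂.subtype).map (e' : L₂ →ₗ[A] L₃) with hT₃
  have eS : (Q.comap K₂.subtype) ≃ₗ[A] S₁ := e.symm.submoduleMap _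
  have eT : (Q.comap L₂.subtype) ≃ₗ[A] T₃ := e'.submoduleMap _
  -- lift to submodules of H₁ and H₃
  refine ⟨S₁.map K₁.subtype, T₃.map L₃.subtype, ?_, ?_⟩
  · -- nonzero
    haveI : Nontrivial Q := (Submodule.nontrivial_iff_ne_bot).2 hQne
    haveI : Nontrivial (Q.comap K₂.subtype) := eK.toEquiv.nontrivial
    haveI : Nontrivial S₁ := eS.symm.toEquiv.nontrivial
    haveI : Nontrivial (S₁.map K₁.subtype) :=
      (Submodule.equivMapOfInjective K₁.subtype K₁.injective_subtype S₁).symm.toEquiv.nontrivial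
    exact ne_bot_of_nontrivial _
  · refine ⟨(Submodule.equivMapOfInjective K₁.subtype K₁.injective_subtype S₁).symm.trans
      (eS.symm.trans (eK.trans (eL.symm.trans (eT.trans
      (Submodule.equivMapOfInjective L₃.subtype L₃.injective_subtype T₃)))))⟩
end

section
/- Let A be a commutative ring and E a nonzero uniform A-module. Then the set p_E = { a ∈ A | there exists a nonzero x ∈ E with a·x = 0 }, equal to the union of the annihilators of the nonzero elements of E, is a prime ideal of A. -/
/-- For a nonzero uniform module `E` over a commutative ring `A`, the set of
elements of `A` annihilating some nonzero element of `E` (the union of the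
annihilators of the nonzero elements) is a prime ideal. -/
theorem union_ann_prime {A E : Type*} [CommRing A] [AddCommGroup E] [Module A E]
    [Nontrivial E]
    (hUnif : ∀ (N K : Submodule A E), N ≠ ⊥ → K ≠ ⊥ → N ⊓ K ≠ ⊥) :
    ∃ p : Ideal A, p.IsPrime ∧ ∀ a : A, a ∈ p ↔ ∃ x : E, x ≠ 0 ∧ a • x = 0 := by
  have hadd : ∀ a b : A, (∃ x : E, x ≠ 0 ∧ a • x = 0) → (∃ x : E, x ≠ 0 ∧ b • x = 0) →
      ∃ x : E, x ≠ 0 ∧ (a + b) • x = 0 := by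
    rintro a b ⟨x, hx, hax⟩ ⟨y, hy, hby⟩
    have hN : (Submodule.span A {x} : Submodule A E) ≠ ⊥ := by
      simpa [Submodule.span_singleton_eq_bot] using hx
    have hK : (Submodule.span A {y} : Submodule A E) ≠ ⊥ := by
      simpa [Submodule.span_singleton_eq_bot] using hy
    obtain ⟨z, hz, hz0⟩ := (Submodule.ne_bot_iff _).mp (hUnif _ _ hN hK)
    obtain ⟨c, hc⟩ := Submodule.mem_span_singleton.mp hz.1
    obtain ⟨d, hd⟩ := Submodule.mem_span_singleton.mp hz.2
    refine ⟨z, hz0, ?_⟩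
    have haz : a • z = 0 := by rw [← hc, smul_comm, hax, smul_zero]
    have hbz : b • z = 0 := by rw [← hd, smul_comm, hby, smul_zero]
    rw [add_smul, haz, hbz, add_zero]
  refine ⟨{ carrier := {a | ∃ x : E, x ≠ 0 ∧ a • x = 0},
            zero_mem' := by
              obtain ⟨x, hx⟩ := exists_ne (0 : E)
              exact ⟨x, hx, zero_smul _ _⟩,
            add_mem' := fun ha hb => hadd _ _ ha hb,
            smul_mem' := by
              rintro c a ⟨x, hx, hax⟩
              exact ⟨x, hx, by rw [smul_eq_mul, mul_smul, hax, smul_zero]⟩ }, ?_, ?_⟩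
  · constructor
    · intro h
      obtain ⟨x, hx, h1⟩ := (Ideal.eq_top_iff_one _).mp h
      exact hx (by simpa using h1)
    · rintro a b ⟨x, hx, hab⟩
      by_cases hbx : b • x = 0
      · exact Or.inr ⟨x, hx, hbx⟩
      · exact Or.inl ⟨b • x, hbx, by rw [← mul_smul]; exact hab⟩
  · intro a; rfl
end

section
/- Let A be a commutative ring, 𝔭 a prime ideal of A, and E an injective hull of A/𝔭. Then for every nonzero element x of E, the annihilator of x is contained in 𝔭. -/
/-- `i : M →ₗ[A] E` exhibits `E` as an injective hull of `M`: `E` is an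
injective module containing (the image of) `M` as an essential submodule. -/
def IsInjectiveHull {A M E : Type*} [Ring A] [AddCommGroup M] [Module A M]
    [AddCommGroup E] [Module A E] (i : M →ₗ[A] E) : Prop :=
  Module.Injective A E ∧ Function.Injective i ∧
    ∀ K : Submodule A E, K ≠ ⊥ → K ⊓ LinearMap.range i ≠ ⊥

/-- If  is an injective hull of  for a prime , then the
annihilator of any nonzero element of  is contained in . -/
theorem ann_le_prime {A E : Type*} [CommRing A] [AddCommGroup E] [Module A E]
    (𝔭 : Ideal A) (h𝔭 : 𝔭.IsPrime) (i : (A ⧸ 𝔭) →ₗ[A] E)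
    (hE : IsInjectiveHull i) :
    ∀ x : E, x ≠ 0 → ∀ a : A, a • x = 0 → a ∈ 𝔭 := by
  obtain ⟨_, hinj, hess⟩ := hE
  intro x hx a hax
  -- the span of x is nonzero
  have hK : (Submodule.span A {x} : Submodule A E) ≠ ⊥ := by
    simpa [Submodule.span_singleton_eq_bot] using hx
  obtain ⟨y, hy⟩ := Submodule.exists_mem_ne_zero_of_ne_bot (hess _ hK)
  obtain ⟨⟨hy1, hy2⟩, hy0⟩ := hy
  obtain ⟨q, hq⟩ := hy2
  obtain ⟨c, hc⟩ := Submodule.mem_span_singleton.mp hy1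
  obtain ⟨b, rfl⟩ := Ideal.Quotient.mk_surjective q
  by_contra ha
  -- a • y = 0
  have hay : a • y = 0 := by
    rw [← hc, smul_comm, hax, smul_zero]
  have : i (a • Ideal.Quotient.mk 𝔭 b) = 0 := by
    rw [map_smul, hq, hay]
  have hz : a • Ideal.Quotient.mk 𝔭 b = 0 := by
    apply hinj
    simpa using this
  have hab : a * b ∈ 𝔭 := by
    have h2 : Ideal.Quotient.mk 𝔭 (a * b) = 0 := by
      rw [map_mul, ← smul_eq_mul]; exact hz
    exact (Ideal.Quotient.eq_zero_iff_mem).mp h2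
  have hb : b ∈ 𝔭 := (h𝔭.mem_or_mem hab).resolve_left ha
  have : Ideal.Quotient.mk 𝔭 b = 0 := Ideal.Quotient.eq_zero_iff_mem.mpr hb
  rw [this, map_zero] at hq
  exact hy0 hq.symm
end

section
/- Let A be a commutative ring, 𝔭 a prime ideal, E an injective hull of A/𝔭, and 𝔞 an ideal of A. Then there exists a nonzero A-linear map A/𝔞 → E if and only if 𝔞 ⊆ 𝔭. -/
/-- For an injective hull  of  and any ideal , there is a nonzero
map  iff . -/
theorem hom_quotient_ne_zero_iff {A E : Type*} [CommRing A] [AddCommGroup E]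
    [Module A E] (𝔭 : Ideal A) (h𝔭 : 𝔭.IsPrime) (i : (A ⧸ 𝔭) →ₗ[A] E)
    (hE : IsInjectiveHull i) (𝔞 : Ideal A) :
    (∃ f : (A ⧸ 𝔞) →ₗ[A] E, f ≠ 0) ↔ 𝔞 ≤ 𝔭 := by
  obtain ⟨_, hi, hess⟩ := hE
  constructor
  · rintro ⟨f, hf⟩
    set e := f (𝔞.mkQ 1) with he
    have he0 : e ≠ 0 := by
      intro h0
      apply hf
      apply LinearMap.ext
      intro x
      obtain ⟨x, rfl⟩ := 𝔞.mkQ_surjective x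
      have : 𝔞.mkQ x = x • 𝔞.mkQ 1 := by rw [← map_smul, smul_eq_mul, mul_one]
      rw [this, map_smul, ← he, h0, smul_zero]
      rfl
    have hmul : ∀ r ∈ 𝔞, r • e = 0 := by
      intro r hr
      have h1 : r • 𝔞.mkQ 1 = 𝔞.mkQ r := by rw [← map_smul, smul_eq_mul, mul_one]
      have h2 : 𝔞.mkQ r = 0 := by
        rw [Submodule.mkQ_apply, Submodule.Quotient.mk_eq_zero]; exact hr
      rw [he, ← map_smul, h1, h2, map_zero]
    have hspan : Submodule.span A {e} ≠ ⊥ := by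
      simpa [Submodule.span_singleton_eq_bot] using he0
    obtain ⟨z, hz, hz0⟩ := Submodule.exists_mem_ne_zero_of_ne_bot (hess _ hspan)
    obtain ⟨hz1, y, hy⟩ := Submodule.mem_inf.1 hz
    obtain ⟨a, ha⟩ := Submodule.mem_span_singleton.1 hz1
    obtain ⟨b, rfl⟩ := 𝔭.mkQ_surjective y
    have hb : b ∉ 𝔭 := by
      intro hb
      apply hz0
      rw [← hy]
      have : 𝔭.mkQ b = 0 := by
        rw [Submodule.mkQ_apply, Submodule.Quotient.mk_eq_zero]; exact hb
      rw [this, map_zero]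
    intro r hr
    have hrz : r • z = 0 := by
      rw [← ha, smul_comm, hmul r hr, smul_zero]
    rw [← hy, ← map_smul] at hrz
    have h3 : r • (𝔭.mkQ b) = 0 := by
      apply hi
      rw [map_zero]; exact hrz
    have hrb : r * b ∈ 𝔭 := by
      rw [← Submodule.Quotient.mk_eq_zero, ← Submodule.mkQ_apply, ← smul_eq_mul,
        map_smul]
      exact h3
    rcases h𝔭.mem_or_mem hrb with h | h
    · exact h
    · exact absurd h hb
  · intro h
    refine ⟨i.comp (Submodule.mapQ 𝔞 𝔭 LinearMap.id (fun x hx => h hx)), ?_⟩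
    intro h0
    have h1 : 𝔭.mkQ 1 ≠ 0 := by
      rw [Ne, Submodule.mkQ_apply, Submodule.Quotient.mk_eq_zero]
      exact fun hh => h𝔭.ne_top (Ideal.eq_top_iff_one _ |>.2 hh)
    apply h1
    apply hi
    rw [map_zero]
    have := congrFun (congrArg DFunLike.coe h0) (𝔞.mkQ 1)
    simpa [Submodule.mapQ_apply] using this
end

section
/- (Cohen's theorem) Let A be a commutative ring in which every prime ideal is finitely generated. Then A is noetherian. -/
/-- Cohen's theorem: if every prime ideal of a commutative ring `A` is
finitely generated, then `A` is noetherian. -/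
theorem cohen {A : Type*} [CommRing A]
    (h : ∀ p : Ideal A, p.IsPrime → p.FG) : IsNoetherianRing A := by
  rw [isNoetherianRing_iff, isNoetherian_def]
  by_contra hn
  push_neg at hn
  obtain ⟨I₀, hI₀⟩ := hn
  -- Zorn's lemma on the set of non-f.g. ideals
  obtain ⟨P, -, hPmax⟩ := zorn_le_nonempty₀ {I : Ideal A | ¬ I.FG}
    (fun c hc hchain J hJ => by
      refine ⟨sSup c, fun hfg => ?_, fun z hz => le_sSup hz⟩
      obtain ⟨x, hx, hle⟩ := (CompleteLattice.isCompactElement_iff_le_of_directed_sSup_le (α := Ideal A) (sSup c)).mp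
        ((Submodule.fg_iff_compact _).mp hfg) c ⟨J, hJ⟩ hchain.directedOn le_rfl
      have hxeq : sSup c = x := le_antisymm hle (le_sSup hx)
      exact hc hx (hxeq ▸ hfg))
    I₀ hI₀
  have hP : ¬ P.FG := hPmax.prop
  -- P is prime
  have hprime : P.IsPrime := by
    constructor
    · intro htop
      exact hP (htop ▸ ⟨{1}, by simp [Ideal.span_singleton_one]⟩)
    · intro a b hab
      by_contra hcon
      push_neg at hcon
      obtain ⟨ha, hb⟩ := hcon
      -- J = P + (a) is strictly bigger, hence f.g.
      set J : Ideal A := P ⊔ Ideal.span {a} with hJdef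
      have hPJ : P < J := lt_of_le_of_ne le_sup_left (fun hEq => ha (hEq ▸ Ideal.mem_sup_right (Ideal.subset_span rfl)))
      have hJfg : J.FG := by
        by_contra hJfg
        exact hPJ.ne (le_antisymm hPJ.le (hPmax.2 hJfg hPJ.le))
      -- Q = (P : a) contains b, strictly bigger, hence f.g.
      set Q : Ideal A := P.colon (Ideal.span {a}) with hQdef
      have hPQ : P < Q := by
        refine lt_of_le_of_ne (fun x hx => ?_) (fun hEq => hb ?_)
        · exact Submodule.mem_colon.mpr fun y hy => by
            obtain ⟨r, rfl⟩ := Ideal.mem_span_singleton'.mp hy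
            simpa [smul_eq_mul, mul_comm] using P.mul_mem_left (r * a) hx
        · rw [hEq]
          exact Ideal.mem_colon_span_singleton.mpr (by rwa [mul_comm])
      have hQfg : Q.FG := by
        by_contra hQfg
        exact hPQ.ne (le_antisymm hPQ.le (hPmax.2 hQfg hPQ.le))
      -- write generators of J as pᵢ + cᵢ a
      obtain ⟨s, hs⟩ := hJfg
      have hdecomp : ∀ y ∈ s, ∃ p c, p ∈ P ∧ y = p + c * a := by
        intro y hy
        have : y ∈ J := hs ▸ Ideal.subset_span hy
        rw [hJdef] at this
        obtain ⟨p, hp, z, hz, rfl⟩ := Submodule.mem_sup.mp this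
        obtain ⟨c, rfl⟩ := Ideal.mem_span_singleton'.mp hz
        exact ⟨p, c, hp, by ring⟩
      choose! p c hpP hyeq using hdecomp
      -- claim : P = span (p '' s) ⊔ (a) * Q, which is f.g., contradiction
      have hPeq : P = Ideal.span (p '' s) ⊔ Ideal.span {a} * Q := by
        apply le_antisymm
        · intro x hx
          have hxJ : x ∈ Ideal.span (s : Set A) := hs.symm ▸ Ideal.mem_sup_left hx
          obtain ⟨f, -, hf⟩ := Submodule.mem_span_finset.mp hxJ
          have hsum : x = (∑ y ∈ s, f y * p y) + (∑ y ∈ s, f y * c y) * a := by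
            rw [← hf, Finset.sum_mul, ← Finset.sum_add_distrib]
            refine Finset.sum_congr rfl fun y hy => ?_
            rw [smul_eq_mul]
            calc f y * y = f y * (p y + c y * a) := by rw [← hyeq y hy]
              _ = f y * p y + f y * c y * a := by ring
          have hu : (∑ y ∈ s, f y * p y) ∈ Ideal.span (p '' s) :=
            Ideal.sum_mem _ fun y hy => Ideal.mul_mem_left _ _
              (Ideal.subset_span ⟨y, hy, rfl⟩)
          have huP : (∑ y ∈ s, f y * p y) ∈ P :=
            Ideal.sum_mem _ fun y hy => Ideal.mul_mem_left _ _ (hpP y hy)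
          have htQ : (∑ y ∈ s, f y * c y) ∈ Q := by
            refine Ideal.mem_colon_span_singleton.mpr ?_
            have : (∑ y ∈ s, f y * c y) * a = x - (∑ y ∈ s, f y * p y) := by
              rw [hsum]; ring
            rw [this]
            exact P.sub_mem hx huP
          rw [hsum]
          refine Submodule.add_mem _ (Ideal.mem_sup_left hu) (Ideal.mem_sup_right ?_)
          rw [mul_comm _ a]
          exact Ideal.mul_mem_mul (Ideal.mem_span_singleton_self a) htQ
        · refine sup_le (Ideal.span_le.mpr ?_) (Ideal.span_singleton_mul_le_iff.mpr ?_)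
          · rintro _ ⟨y, hy, rfl⟩
            exact hpP y hy
          · intro x hx
            have := Ideal.mem_colon_span_singleton.mp hx
            rwa [mul_comm]
      classical
      refine hP (hPeq ▸ Submodule.FG.sup ⟨s.image p, by simp⟩
        (Submodule.FG.mul (Submodule.fg_span_singleton a) hQfg))
  exact hP (h P hprime)
end

section
/- Every nonzero noetherian module over a ring contains a monoform submodule. -/
lemma monoform_aux {A M : Type*} [Ring A] [AddCommGroup M] [Module A M]
    [IsNoetherian A M] (N : Submodule A M) :
    ∀ (K : Submodule A M) (f : K →ₗ[A] M ⧸ N), Function.Injective f → K ≠ ⊥ →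
      ∃ T : Submodule A M, T ≠ ⊥ ∧ T ≤ K ∧ Monoform A T := by
  induction N using WellFoundedGT.induction with
  | _ N ih =>
  intro K f hf hK
  by_cases hmono : Monoform A K
  · exact ⟨K, hK, le_refl K, hmono⟩
  · haveI hKnt : Nontrivial K := Submodule.nontrivial_iff_ne_bot.mpr hK
    obtain ⟨N₀, hN₀, K₀, f₀, hf₀, hK₀⟩ :
        ∃ N₀ : Submodule A K, N₀ ≠ ⊥ ∧ ∃ (K₀ : Submodule A K)
          (f₀ : K₀ →ₗ[A] K ⧸ N₀), Function.Injective f₀ ∧ K₀ ≠ ⊥ := by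
      by_contra h
      push_neg at h
      exact hmono ⟨hKnt, fun N₀ hN₀ K₀ f₀ hf₀ => h N₀ hN₀ K₀ f₀ hf₀⟩
    have hfker : LinearMap.ker f = ⊥ := LinearMap.ker_eq_bot.mpr hf
    set Nbar : Submodule A (M ⧸ N) := Submodule.map f N₀ with hNbardef
    have hNbar : Nbar ≠ ⊥ := by
      intro h
      exact hN₀ (Submodule.map_injective_of_injective hf (by rw [Submodule.map_bot, ← hNbardef, h]))
    set N' : Submodule A M := Submodule.comap N.mkQ Nbar with hN'def
    have hle : N ≤ N' := by
      intro x hx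
      simp only [hN'def, Submodule.mem_comap]
      have : N.mkQ x = 0 := (Submodule.Quotient.mk_eq_zero N).mpr hx
      rw [this]; exact Nbar.zero_mem
    have hmapeq : Submodule.map N.mkQ N' = Nbar := by
      rw [hN'def, Submodule.map_comap_eq, Submodule.range_mkQ, top_inf_eq]
    have hNN' : N < N' := by
      refine lt_of_le_of_ne hle fun h => hNbar ?_
      rw [← hmapeq, ← h, eq_bot_iff]
      rintro x ⟨y, hy, rfl⟩
      exact (Submodule.Quotient.mk_eq_zero N).mpr hy
    set K' : Submodule A M := Submodule.map K.subtype K₀ with hK'def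
    have hK' : K' ≠ ⊥ := by
      intro h
      exact hK₀ (Submodule.map_injective_of_injective K.injective_subtype
        (by rw [Submodule.map_bot, ← hK'def, h]))
    have hK'le : K' ≤ K := Submodule.map_subtype_le K K₀
    -- build the injective map K' →ₗ M ⧸ N'
    have hN₀le : N₀ ≤ Submodule.comap f Nbar := Submodule.le_comap_map f N₀
    set g3 : (K ⧸ N₀) →ₗ[A] (M ⧸ N) ⧸ Nbar := Submodule.mapQ N₀ Nbar f hN₀le with hg3def
    have hg3 : Function.Injective g3 := by
      rw [← LinearMap.ker_eq_bot, eq_bot_iff]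
      rintro x hx
      obtain ⟨y, rfl⟩ := Submodule.Quotient.mk_surjective N₀ x
      simp only [LinearMap.mem_ker, hg3def, Submodule.mapQ_apply] at hx
      rw [Submodule.Quotient.mk_eq_zero] at hx
      obtain ⟨z, hz, hzy⟩ := hx
      have : z = y := hf hzy
      rw [Submodule.mem_bot, Submodule.Quotient.mk_eq_zero]
      exact this ▸ hz
    set e1 : K₀ ≃ₗ[A] K' := Submodule.equivMapOfInjective K.subtype K.injective_subtype K₀
      with he1def
    set g4 : ((M ⧸ N) ⧸ Nbar) ≃ₗ[A] M ⧸ N' :=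
      (Submodule.quotEquivOfEq Nbar (Submodule.map N.mkQ N') hmapeq.symm).trans
        (Submodule.quotientQuotientEquivQuotient N N' hle) with hg4def
    set g : K' →ₗ[A] M ⧸ N' :=
      g4.toLinearMap ∘ₗ g3 ∘ₗ f₀ ∘ₗ e1.symm.toLinearMap with hgdef
    have hg : Function.Injective g := by
      simp only [hgdef, LinearMap.coe_comp, LinearEquiv.coe_coe]
      exact g4.injective.comp (hg3.comp (hf₀.comp e1.symm.injective))
    obtain ⟨T, hT, hTK', hTm⟩ := ih N' hNN' K' g hg hK'
    exact ⟨T, hT, hTK'.trans hK'le, hTm⟩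

/-- Every nonzero noetherian module contains a monoform submodule. -/
theorem exists_monoform_submodule {A M : Type*} [Ring A] [AddCommGroup M]
    [Module A M] [IsNoetherian A M] [Nontrivial M] :
    ∃ N : Submodule A M, N ≠ ⊥ ∧ Monoform A N := by
  have hinj : Function.Injective
      ((⊥ : Submodule A M).mkQ ∘ₗ (⊤ : Submodule A M).subtype) := by
    have h1 : Function.Injective (⊥ : Submodule A M).mkQ := by
      rw [← LinearMap.ker_eq_bot, Submodule.ker_mkQ]
    exact h1.comp (Submodule.injective_subtype ⊤)
  obtain ⟨T, hT, _, hTm⟩ := monoform_aux (⊥ : Submodule A M) ⊤ _ hinj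
    (by
      have : Nontrivial (⊤ : Submodule A M) := Submodule.topEquiv.toEquiv.nontrivial
      exact Submodule.nontrivial_iff_ne_bot.mp this)
  exact ⟨T, hT, hTm⟩
end

section
/- Let A be a commutative ring, 𝔞 and 𝔟 ideals of A, and 𝔭 a prime ideal with injective hull E = E(A/𝔭). Then Hom_A(A/(𝔞+𝔟), E) ≠ 0 if and only if Hom_A(A/𝔞, E) ≠ 0 and Hom_A(A/𝔟, E) ≠ 0. -/
lemma hom_ne_zero_iff_le {A E : Type*} [CommRing A] [AddCommGroup E]
    [Module A E] (𝔞 𝔭 : Ideal A) (h𝔭 : 𝔭.IsPrime)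
    (i : (A ⧸ 𝔭) →ₗ[A] E) (hE : IsInjectiveHull i) :
    (∃ f : (A ⧸ 𝔞) →ₗ[A] E, f ≠ 0) ↔ 𝔞 ≤ 𝔭 := by
  obtain ⟨-, hinj, hess⟩ := hE
  constructor
  · rintro ⟨f, hf⟩ b hb
    -- f is nonzero at some point
    obtain ⟨m, hm⟩ : ∃ m, f m ≠ 0 := by
      by_contra h
      push_neg at h
      exact hf (LinearMap.ext fun m => h m)
    -- essentiality : span of f m meets range i
    have hK : Submodule.span A {f m} ≠ ⊥ := by
      simpa [Submodule.span_singleton_eq_bot] using hm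
    have := hess _ hK
    rw [Submodule.ne_bot_iff] at this
    obtain ⟨x, ⟨hx1, hx2⟩, hx0⟩ := this
    obtain ⟨c, rfl⟩ := Submodule.mem_span_singleton.mp hx1
    obtain ⟨z, hz⟩ := hx2
    -- b kills m, hence kills c • f m = i z
    have hbm : b • m = 0 := by
      obtain ⟨a, rfl⟩ := Ideal.Quotient.mk_surjective m
      show b • (Ideal.Quotient.mk 𝔞) a = 0
      have h1 : b • (Ideal.Quotient.mk 𝔞) a = (Ideal.Quotient.mk 𝔞) (b * a) := rfl
      rw [h1]
      exact Ideal.Quotient.eq_zero_iff_mem.mpr (Ideal.mul_mem_right a 𝔞 hb)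
    have hbz : i (b • z) = 0 := by
      rw [map_smul, hz, smul_comm, ← map_smul, hbm, map_zero, smul_zero]
    have hbz' : b • z = 0 := by
      apply hinj
      simpa using hbz
    obtain ⟨w, rfl⟩ := Ideal.Quotient.mk_surjective z
    have hbw : (Ideal.Quotient.mk 𝔭) (b * w) = 0 := by
      have h1 : b • (Ideal.Quotient.mk 𝔭) w = (Ideal.Quotient.mk 𝔭) (b * w) := rfl
      rw [← h1]; exact hbz'
    have hbw' : b * w ∈ 𝔭 := Ideal.Quotient.eq_zero_iff_mem.mp hbw
    rcases h𝔭.mem_or_mem hbw' with h | h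
    · exact h
    · exfalso
      apply hx0
      rw [← hz, Ideal.Quotient.eq_zero_iff_mem.mpr h, map_zero]
  · intro hle
    refine ⟨i ∘ₗ Submodule.mapQ 𝔞 𝔭 LinearMap.id hle, ?_⟩
    intro h0
    have hE0 : i ((Ideal.Quotient.mk 𝔭) 1) = 0 := by
      have := LinearMap.congr_fun h0 ((Ideal.Quotient.mk 𝔞) 1)
      simpa [Submodule.mapQ_apply] using this
    haveI : Nontrivial (A ⧸ 𝔭) := Ideal.Quotient.nontrivial_iff.mpr h𝔭.ne_top
    have h1 : ((Ideal.Quotient.mk 𝔭) 1 : A ⧸ 𝔭) ≠ 0 := by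
      rw [map_one]; exact one_ne_zero
    exact h1 (hinj (by rw [hE0, map_zero]))

/-- `Hom(A ⧸ (𝔞 + 𝔟), E) ≠ 0` iff `Hom(A ⧸ 𝔞, E) ≠ 0` and
`Hom(A ⧸ 𝔟, E) ≠ 0`, where `E` is an injective hull of `A ⧸ 𝔭`. -/
theorem hom_sum_ne_zero_iff {A E : Type*} [CommRing A] [AddCommGroup E]
    [Module A E] (𝔞 𝔟 𝔭 : Ideal A) (h𝔭 : 𝔭.IsPrime)
    (i : (A ⧸ 𝔭) →ₗ[A] E) (hE : IsInjectiveHull i) :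
    (∃ f : (A ⧸ (𝔞 + 𝔟)) →ₗ[A] E, f ≠ 0) ↔
      (∃ g : (A ⧸ 𝔞) →ₗ[A] E, g ≠ 0) ∧ (∃ h : (A ⧸ 𝔟) →ₗ[A] E, h ≠ 0) := by
  rw [hom_ne_zero_iff_le _ _ h𝔭 i hE, hom_ne_zero_iff_le _ _ h𝔭 i hE,
    hom_ne_zero_iff_le _ _ h𝔭 i hE, Ideal.add_eq_sup, sup_le_iff]
end
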